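/- If X and Y are clans of a matrix M with X \ Y ≠ ∅, then Y \ X is a clan of M. -/
import Mathlib

def IsClan {m : Type*} (M : Matrix m m ℝ) (X : Set m) : Prop :=
  ∀ i ∈ X, ∀ j ∈ X, ∀ k ∉ X, M i k = M j k ∧ M k i = M k j

theorem stmt5 {n : ℕ} (M : Matrix (Fin n) (Fin n) ℝ) (X Y : Set (Fin n))
    (hX : IsClan M X) (hY : IsClan M Y) (h : (X \ Y).Nonempty) :
    IsClan M (Y \ X) := by
  obtain ⟨w, hwX, hwY⟩ := h
  rintro i ⟨hiY, hiX⟩ j ⟨hjY, hjX⟩ k hk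
  by_cases hkY : k ∈ Y
  · have hkX : k ∈ X := by
      by_contra hkX
      exact hk ⟨hkY, hkX⟩
    obtain ⟨h1, h2⟩ := hX k hkX w hwX i hiX
    obtain ⟨h3, h4⟩ := hX k hkX w hwX j hjX
    obtain ⟨h5, h6⟩ := hY i hiY j hjY w hwY
    constructor
    · rw [h2, h4, h5]
    · rw [h1, h3, h6]
  · exact hY i hiY j hjY k hkY
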